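/- If U is a random variable uniformly distributed on the interval (0,1), then the covariance of ln U and ln(1-U) equals 1 - π²/6. -/

import Mathlib

open Real MeasureTheory ProbabilityTheory

private lemma aux_integrable (n : ℕ) :
    MeasureTheory.IntegrableOn (fun x : ℝ => x ^ n * Real.log x) (Set.Ioc 0 1) volume := by
  have hg : MeasureTheory.IntegrableOn (fun x : ℝ => 2 * x ^ (-(1/2) : ℝ))
      (Set.Ioc 0 1) volume := by
    have h := (intervalIntegral.intervalIntegrable_rpow' (a := 0) (b := 1)
      (r := -(1/2)) (by norm_num))
    rw [intervalIntegrable_iff_integrableOn_Ioc_of_le zero_le_one] at h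
    exact h.const_mul 2
  refine hg.integrable.mono ?_ ?_
  · exact (((measurable_id.pow_const n).mul Real.measurable_log)).aestronglyMeasurable
  · filter_upwards [ae_restrict_mem measurableSet_Ioc] with x hx
    have hx0 : 0 < x := hx.1
    have hx1 : x ≤ 1 := hx.2
    have hlog : Real.log x ≤ 0 := Real.log_nonpos hx0.le hx1
    have key : -Real.log x ≤ 2 * x ^ (-(1/2) : ℝ) := by
      have h1 : 1 - (x ^ ((1:ℝ)/2))⁻¹ ≤ Real.log (x ^ ((1:ℝ)/2)) :=
        Real.one_sub_inv_le_log_of_pos (Real.rpow_pos_of_pos hx0 _)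
      rw [Real.log_rpow hx0] at h1
      have h2 : (x ^ ((1:ℝ)/2))⁻¹ = x ^ (-(1/2) : ℝ) := by
        rw [← Real.rpow_neg hx0.le]
      rw [h2] at h1
      nlinarith [Real.rpow_pos_of_pos hx0 (-(1/2) : ℝ)]
    have hxn : x ^ n ≤ 1 := pow_le_one₀ hx0.le hx1
    have hxnn : (0:ℝ) ≤ x ^ n := pow_nonneg hx0.le n
    rw [Real.norm_eq_abs, Real.norm_eq_abs, abs_mul, abs_of_nonneg hxnn,
      abs_of_nonpos hlog]
    calc x ^ n * (-Real.log x) ≤ 1 * (-Real.log x) := by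
          apply mul_le_mul_of_nonneg_right hxn (by linarith)
      _ = -Real.log x := one_mul _
      _ ≤ 2 * x ^ (-(1/2) : ℝ) := key
      _ ≤ |2 * x ^ (-(1/2) : ℝ)| := le_abs_self _

private lemma aux_intervalIntegrable (n : ℕ) :
    IntervalIntegrable (fun x : ℝ => x ^ n * Real.log x) volume 0 1 := by
  rw [intervalIntegrable_iff_integrableOn_Ioc_of_le zero_le_one]
  exact aux_integrable n

private lemma aux_integral (n : ℕ) :
    ∫ x in (0:ℝ)..1, x ^ n * Real.log x = -(1 / ((n:ℝ) + 1) ^ 2) := by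
  set F : ℝ → ℝ := fun x => x ^ (n+1) * Real.log x / ((n:ℝ)+1)
    - x ^ (n+1) / ((n:ℝ)+1)^2 with hF
  have hn1 : ((n:ℝ) + 1) ≠ 0 := by positivity
  have hcont : ContinuousOn F (Set.Icc 0 1) := by
    have : F = fun x => x ^ n * (x * Real.log x) / ((n:ℝ)+1)
        - x ^ (n+1) / ((n:ℝ)+1)^2 := by
      funext x; simp only [hF]; ring
    rw [this]
    exact (((continuous_pow n).mul Real.continuous_mul_log).div_const _ |>.sub
      ((continuous_pow (n+1)).div_const _)).continuousOn
  have hderiv : ∀ x ∈ Set.Ioo (0:ℝ) 1,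
      HasDerivWithinAt F (x ^ n * Real.log x) (Set.Ioi x) x := by
    intro x hx
    have hx0 : x ≠ 0 := ne_of_gt hx.1
    have h1 : HasDerivAt (fun y : ℝ => y ^ (n+1) * Real.log y)
        ((((n:ℝ)+1) * x ^ n) * Real.log x + x ^ (n+1) * x⁻¹) x := by
      have hp : HasDerivAt (fun y : ℝ => y ^ (n+1)) (((n:ℝ)+1) * x ^ n) x := by
        simpa using hasDerivAt_pow (n+1) x
      exact hp.mul (Real.hasDerivAt_log hx0)
    have h2 : HasDerivAt (fun y : ℝ => y ^ (n+1)) (((n:ℝ)+1) * x ^ n) x := by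
      simpa using hasDerivAt_pow (n+1) x
    have h3 : HasDerivAt F
        (((((n:ℝ)+1) * x ^ n) * Real.log x + x ^ (n+1) * x⁻¹) / ((n:ℝ)+1)
          - (((n:ℝ)+1) * x ^ n) / ((n:ℝ)+1)^2) x :=
      (h1.div_const _).sub (h2.div_const _)
    have heq : ((((n:ℝ)+1) * x ^ n) * Real.log x + x ^ (n+1) * x⁻¹) / ((n:ℝ)+1)
          - (((n:ℝ)+1) * x ^ n) / ((n:ℝ)+1)^2 = x ^ n * Real.log x := by
      have hxinv : x ^ (n+1) * x⁻¹ = x ^ n := by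
        rw [pow_succ, mul_assoc, mul_inv_cancel₀ hx0, mul_one]
      rw [hxinv]
      field_simp
      ring
    rw [heq] at h3
    exact h3.hasDerivWithinAt
  have := intervalIntegral.integral_eq_sub_of_hasDeriv_right_of_le zero_le_one
    hcont hderiv (aux_intervalIntegrable n)
  rw [this]
  simp only [hF]
  rw [Real.log_one]
  simp [hn1, zero_pow (Nat.succ_ne_zero n)]

private lemma telescoping : HasSum (fun n : ℕ => 1/((n:ℝ)+1) - 1/((n:ℝ)+2)) 1 := by
  have hnn : ∀ n : ℕ, (0:ℝ) ≤ 1/((n:ℝ)+1) - 1/((n:ℝ)+2) := by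
    intro n
    have : (1:ℝ)/((n:ℝ)+2) ≤ 1/((n:ℝ)+1) := by
      apply one_div_le_one_div_of_le <;> [positivity; linarith]
    linarith
  rw [hasSum_iff_tendsto_nat_of_nonneg hnn]
  have hsum : ∀ n : ℕ, ∑ i ∈ Finset.range n, (1/((i:ℝ)+1) - 1/((i:ℝ)+2))
      = 1 - 1/((n:ℝ)+1) := by
    intro n
    calc ∑ i ∈ Finset.range n, (1/((i:ℝ)+1) - 1/((i:ℝ)+2))
        = ∑ i ∈ Finset.range n, (1/((i:ℝ)+1) - 1/(((i+1:ℕ):ℝ)+1)) := by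
          refine Finset.sum_congr rfl fun i _ => ?_
          push_cast; ring_nf
      _ = 1/(((0:ℕ):ℝ)+1) - 1/((n:ℝ)+1) :=
          Finset.sum_range_sub' (f := fun i : ℕ => 1/((i:ℝ)+1)) n
      _ = 1 - 1/((n:ℝ)+1) := by norm_num
  simp_rw [hsum]
  have : Filter.Tendsto (fun n : ℕ => 1/((n:ℝ)+1)) Filter.atTop (nhds 0) :=
    tendsto_one_div_add_atTop_nhds_zero_nat
  simpa using (tendsto_const_nhds (x := (1:ℝ))).sub this

private lemma zeta_shifted : HasSum (fun n : ℕ => 1/((n:ℝ)+2)^2) (Real.pi^2/6 - 1) := by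
  have hb : HasSum (fun n : ℕ => 1/(((n+2:ℕ)):ℝ)^2) (Real.pi^2/6 - 1) := by
    rw [hasSum_nat_add_iff (f := fun n : ℕ => 1/(n:ℝ)^2) 2]
    convert hasSum_zeta_two using 1
    · rfl
    simp [Finset.sum_range_succ]
  refine hb.congr_fun fun n => by push_cast; ring_nf

private lemma series_value :
    HasSum (fun n : ℕ => 1/((n:ℝ)+1) * (1/((n:ℝ)+2)^2)) (2 - Real.pi^2/6) := by
  have h := telescoping.sub zeta_shifted
  have heq : (fun n : ℕ => (1/((n:ℝ)+1) - 1/((n:ℝ)+2)) - 1/((n:ℝ)+2)^2)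
      = fun n : ℕ => 1/((n:ℝ)+1) * (1/((n:ℝ)+2)^2) := by
    funext n
    have h1 : ((n:ℝ)+1) ≠ 0 := by positivity
    have h2 : ((n:ℝ)+2) ≠ 0 := by positivity
    field_simp
    ring
  rw [heq] at h
  convert h using 1
  · rfl
  ring

theorem stmt_1 {Ω : Type*} [MeasureSpace Ω] [IsProbabilityMeasure (ℙ : Measure Ω)]
    (U : Ω → ℝ) (hU : Measurable U)
    (hunif : Measure.map U ℙ = volume.restrict (Set.Ioo (0:ℝ) 1)) :
    (∫ ω, Real.log (U ω) * Real.log (1 - U ω) ∂ℙ)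
      - (∫ ω, Real.log (U ω) ∂ℙ) * (∫ ω, Real.log (1 - U ω) ∂ℙ)
    = 1 - Real.pi ^ 2 / 6 := by
  -- transfer to integrals over (0,1)
  have hmap : ∀ (g : ℝ → ℝ), Measurable g →
      ∫ ω, g (U ω) ∂ℙ = ∫ x in Set.Ioo (0:ℝ) 1, g x := by
    intro g hg
    rw [← MeasureTheory.integral_map hU.aemeasurable hg.aestronglyMeasurable, hunif]
  have hm1 : Measurable fun x : ℝ => Real.log x := Real.measurable_log
  have hm2 : Measurable fun x : ℝ => Real.log (1 - x) :=
    Real.measurable_log.comp (measurable_const.sub measurable_id)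
  have hm3 : Measurable fun x : ℝ => Real.log x * Real.log (1 - x) := hm1.mul hm2
  rw [hmap _ hm3, hmap _ hm1, hmap _ hm2]
  -- the two simple integrals
  have hIoo_log : ∫ x in Set.Ioo (0:ℝ) 1, Real.log x = -1 := by
    rw [← MeasureTheory.integral_Ioc_eq_integral_Ioo,
      ← intervalIntegral.integral_of_le zero_le_one]
    have := aux_integral 0
    simp only [pow_zero, one_mul, Nat.cast_zero] at this
    rw [this]; norm_num
  have hIoo_log1 : ∫ x in Set.Ioo (0:ℝ) 1, Real.log (1 - x) = -1 := by
    rw [← MeasureTheory.integral_Ioc_eq_integral_Ioo,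
      ← intervalIntegral.integral_of_le zero_le_one]
    rw [intervalIntegral.integral_comp_sub_left (fun x => Real.log x) 1]
    norm_num
  -- main integral
  have hmain : ∫ x in Set.Ioo (0:ℝ) 1, Real.log x * Real.log (1 - x)
      = 2 - Real.pi ^ 2 / 6 := by
    set μ := volume.restrict (Set.Ioo (0:ℝ) 1) with hμ
    set f : ℕ → ℝ → ℝ := fun n x => (-Real.log x) * (x ^ (n+1) / ((n:ℝ)+1)) with hf
    have hfm : ∀ n, Measurable (f n) := fun n =>
      (Real.measurable_log.neg).mul ((measurable_id.pow_const (n+1)).div_const _)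
    -- pointwise series identity on Ioo 0 1
    have hae : ∀ᵐ x ∂μ, Real.log x * Real.log (1 - x) = ∑' n, f n x := by
      filter_upwards [ae_restrict_mem measurableSet_Ioo] with x hx
      have habs : |x| < 1 := by
        rw [abs_of_pos hx.1]; exact hx.2
      have hs := (Real.hasSum_pow_div_log_of_abs_lt_one habs).mul_left (-Real.log x)
      have ht : ∑' n, f n x = Real.log x * Real.log (1 - x) := by
        simp only [hf]
        rw [hs.tsum_eq]; ring
      rw [ht]
    -- integral of each term
    have hint : ∀ n, MeasureTheory.Integrable (f n) μ := by
      intro n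
      have h := ((aux_integrable (n+1)).mono_set Set.Ioo_subset_Ioc_self).neg.div_const
        ((n:ℝ)+1)
      refine h.congr ?_
      filter_upwards with x
      simp only [hf, Pi.div_apply, Pi.neg_apply]
      ring
    have hval : ∀ n, ∫ x, f n x ∂μ = 1/((n:ℝ)+1) * (1/((n:ℝ)+2)^2) := by
      intro n
      have h1 : ∫ x, f n x ∂μ
          = ∫ x in (0:ℝ)..1, (-Real.log x) * (x ^ (n+1) / ((n:ℝ)+1)) := by
        rw [hμ, ← MeasureTheory.integral_Ioc_eq_integral_Ioo,
          ← intervalIntegral.integral_of_le zero_le_one]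
      rw [h1]
      have h2 : ∀ x : ℝ, (-Real.log x) * (x ^ (n+1) / ((n:ℝ)+1))
          = (-(1/((n:ℝ)+1))) * (x ^ (n+1) * Real.log x) := by
        intro x; ring
      simp_rw [h2]
      rw [intervalIntegral.integral_const_mul, aux_integral (n+1)]
      push_cast
      ring
    -- nonnegativity of terms on Ioo
    have hpos : ∀ n, ∀ x ∈ Set.Ioo (0:ℝ) 1, 0 ≤ f n x := by
      intro n x hx
      have : Real.log x ≤ 0 := Real.log_nonpos hx.1.le hx.2.le
      have hx0 := hx.1
      simp only [hf]
      have : 0 ≤ -Real.log x := by linarith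
      positivity
    -- summability condition for integral_tsum
    have hlint : ∑' n, ∫⁻ x, ‖f n x‖₊ ∂μ ≠ ⊤ := by
      have heq : ∀ n, ∫⁻ x, ‖f n x‖₊ ∂μ
          = ENNReal.ofReal (1/((n:ℝ)+1) * (1/((n:ℝ)+2)^2)) := by
        intro n
        have hnorm : ∫ x, ‖f n x‖ ∂μ = ∫ x, f n x ∂μ := by
          apply MeasureTheory.integral_congr_ae
          filter_upwards [ae_restrict_mem measurableSet_Ioo] with x hx
          exact abs_of_nonneg (hpos n x hx)
        have h := MeasureTheory.ofReal_integral_eq_lintegral_ofReal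
          (hint n).norm (Filter.Eventually.of_forall fun x => norm_nonneg _)
        simp_rw [ofReal_norm_eq_enorm, enorm_eq_nnnorm] at h
        rw [← h, hnorm, hval n]
      simp_rw [heq]
      rw [← ENNReal.ofReal_tsum_of_nonneg (fun n => by positivity)
        series_value.summable]
      exact ENNReal.ofReal_ne_top
    calc ∫ x, Real.log x * Real.log (1 - x) ∂μ
        = ∫ x, ∑' n, f n x ∂μ := MeasureTheory.integral_congr_ae hae
      _ = ∑' n, ∫ x, f n x ∂μ :=
          MeasureTheory.integral_tsum (fun n => (hfm n).aestronglyMeasurable) hlint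
      _ = ∑' n : ℕ, 1/((n:ℝ)+1) * (1/((n:ℝ)+2)^2) := by simp_rw [hval]
      _ = 2 - Real.pi ^ 2 / 6 := series_value.tsum_eq
  rw [hmain, hIoo_log, hIoo_log1]
  ring
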